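/- A bag generation process M : X → Y → Δ(S) is reconstructible if and only if, for every x ∈ X, the family of vectors (M(x)(y))_{y ∈ Y} in ℝ^S is linearly independent. -/
import Mathlib


/-- A probability vector on a finite type `T`. -/
def IsProbVec {T : Type*} [Fintype T] (Q : T → ℝ) : Prop :=
  (∀ t, 0 ≤ Q t) ∧ ∑ t, Q t = 1

/-- The argmax set of a real-valued function on labels. -/
def argmaxSet {Y : Type*} (Q : Y → ℝ) : Set Y := {y | ∀ y', Q y' ≤ Q y}

private lemma max_neg_zero_eq (a : ℝ) : max (-a) 0 = max a 0 - a := by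
  rcases le_total a 0 with h | h
  · rw [max_eq_left (neg_nonneg.mpr h), max_eq_right h]; ring
  · rw [max_eq_right (neg_nonpos.mpr h), max_eq_left h]; ring

/-- A bag generation process `M : X → Y → Δ(S)` (with `S = Finset Y` the space of
bags of labels) is reconstructible if and only if, for every instance `x`, the family
of vectors `(M x y)_{y ∈ Y}` in `ℝ^S` is linearly independent. -/
theorem reconstructible_iff_linearIndependent
    {X Y : Type*} [Fintype Y] [DecidableEq Y] (hY : 2 ≤ Fintype.card Y)
    (M : X → Y → Finset Y → ℝ) (hM : ∀ x y, IsProbVec (M x y)) :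
    (∀ x : X, ∀ Q1 Q2 : Y → ℝ, IsProbVec Q1 → IsProbVec Q2 →
        (∀ s : Finset Y, ∑ y, Q1 y * M x y s = ∑ y, Q2 y * M x y s) →
        argmaxSet Q1 = argmaxSet Q2)
    ↔ (∀ x : X, LinearIndependent ℝ (M x)) := by
  classical
  have hYne : Nonempty Y := Fintype.card_pos_iff.mp (by omega)
  constructor
  · intro hrec x
    rw [Fintype.linearIndependent_iff]
    intro g hg
    by_contra hne
    push_neg at hne
    obtain ⟨y0, hy0⟩ := hne
    have hsum0 : ∀ s : Finset Y, ∑ y, g y * M x y s = 0 := by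
      intro s
      have := congrFun hg s
      simpa [Finset.sum_apply] using this
    have hgsum : ∑ y, g y = 0 := by
      have h0 : ∑ s : Finset Y, ∑ y, g y * M x y s = 0 := by simp [hsum0]
      rw [Finset.sum_comm] at h0
      calc ∑ y, g y = ∑ y, g y * ∑ s : Finset Y, M x y s := by
            refine Finset.sum_congr rfl fun y _ => ?_
            rw [(hM x y).2, mul_one]
        _ = 0 := by simpa [Finset.mul_sum] using h0
    set A : ℝ := ∑ y, max (g y) 0 with hA
    have hA0 : 0 < A := by
      rcases lt_or_ge 0 A with h | h
      · exact h
      · exfalso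
        have hAz : A = 0 :=
          le_antisymm h (Finset.sum_nonneg fun y _ => le_max_right _ _)
        have hz : ∀ y ∈ Finset.univ, max (g y) 0 = 0 :=
          (Finset.sum_eq_zero_iff_of_nonneg (fun y _ => le_max_right _ _)).mp hAz
        have hgle : ∀ y ∈ (Finset.univ : Finset Y), g y ≤ 0 := by
          intro y _
          have := hz y (Finset.mem_univ y)
          have hle : g y ≤ max (g y) 0 := le_max_left _ _
          linarith
        have := (Finset.sum_eq_zero_iff_of_nonpos hgle).mp hgsum
        exact hy0 (this y0 (Finset.mem_univ y0))
    set P : Y → ℝ := fun y => max (g y) 0 / A with hP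
    set N : Y → ℝ := fun y => max (-(g y)) 0 / A with hN
    have hsumN : ∑ y, max (-(g y)) 0 = A := by
      simp only [max_neg_zero_eq, Finset.sum_sub_distrib, hgsum, hA, sub_zero]
    have hPprob : IsProbVec P := by
      constructor
      · intro y; exact div_nonneg (le_max_right _ _) hA0.le
      · simp only [hP, ← Finset.sum_div]
        rw [← hA, div_self hA0.ne']
    have hNprob : IsProbVec N := by
      constructor
      · intro y; exact div_nonneg (le_max_right _ _) hA0.le
      · simp only [hN, ← Finset.sum_div]
        rw [hsumN, div_self hA0.ne']
    have hmix : ∀ s : Finset Y, ∑ y, P y * M x y s = ∑ y, N y * M x y s := by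
      intro s
      have : ∑ y, (P y - N y) * M x y s = 0 := by
        have hPN : ∀ y, P y - N y = g y / A := by
          intro y
          simp only [hP, hN, max_neg_zero_eq]
          ring
        calc ∑ y, (P y - N y) * M x y s = ∑ y, (g y / A) * M x y s := by
              refine Finset.sum_congr rfl fun y _ => ?_; rw [hPN]
          _ = (∑ y, g y * M x y s) / A := by
              rw [Finset.sum_div]
              exact Finset.sum_congr rfl fun y _ => by ring
          _ = 0 := by rw [hsum0, zero_div]
      simp only [sub_mul] at this
      rw [Finset.sum_sub_distrib] at this
      linarith [this]
    have hargmax := hrec x P N hPprob hNprob hmix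
    obtain ⟨y1, _, hy1⟩ := Finset.exists_max_image Finset.univ P ⟨hYne.some, Finset.mem_univ _⟩
    have hy1P : y1 ∈ argmaxSet P := fun y' => hy1 y' (Finset.mem_univ _)
    have hPy1pos : 0 < P y1 := by
      by_contra h
      push_neg at h
      have : ∑ y, P y ≤ 0 :=
        Finset.sum_nonpos fun y _ => le_trans (hy1 y (Finset.mem_univ y)) h
      rw [hPprob.2] at this; linarith
    have hgy1 : 0 < g y1 := by
      have : 0 < max (g y1) 0 := by
        by_contra h
        push_neg at h
        have : P y1 ≤ 0 := div_nonpos_of_nonpos_of_nonneg h hA0.le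
        linarith
      rcases lt_max_iff.mp this with h | h
      · exact h
      · exact absurd h (lt_irrefl 0)
    have hNy1 : N y1 = 0 := by
      simp only [hN]
      rw [max_eq_right (neg_nonpos.mpr hgy1.le), zero_div]
    have hy1N : y1 ∈ argmaxSet N := hargmax ▸ hy1P
    have : ∑ y, N y ≤ 0 :=
      Finset.sum_nonpos fun y _ => by
        have := hy1N y; rw [hNy1] at this; exact this
    rw [hNprob.2] at this; linarith
  · intro hli x Q1 Q2 hQ1 hQ2 hmix
    have hg : ∀ y, Q1 y - Q2 y = 0 := by
      refine Fintype.linearIndependent_iff.mp (hli x) (fun y => Q1 y - Q2 y) ?_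
      funext s
      simp only [Finset.sum_apply, Pi.smul_apply, smul_eq_mul, Pi.zero_apply, sub_mul,
        Finset.sum_sub_distrib]
      rw [hmix s]; ring
    have : Q1 = Q2 := funext fun y => by linarith [hg y]
    rw [this]
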